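/- Let s = (s_i)_{i∈ℕ} be a real sequence and define the derivative sequence ∂s by the Riesz functional relation L_{∂s}(p) = −L_s(p') for all polynomials p ∈ ℝ[x]. If there exists C > 0 such that both Σ_{k=0}^d C(d,k)·|L_s(x^k(1−x)^{d−k})| < C and Σ_{k=0}^d C(d,k)·|L_{∂s}(x^k(1−x)^{d−k})| < C hold for all d ∈ ℕ, then there exists a function f : [0,1] → ℝ of bounded variation such that s_i = ∫_0^1 x^i·f(x) dx for all i ∈ ℕ. -/

import Mathlib

open MeasureTheory Polynomial

private lemma pow_sub_pow_le_aux {a b : ℝ} (hb : 0 ≤ b) (hba : b ≤ a) (ha : a ≤ 1) (j : ℕ) :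
    a ^ j - b ^ j ≤ j * (a - b) := by
  induction j with
  | zero => simp
  | succ n ih =>
    have h1 : b ^ n ≤ a ^ n := pow_le_pow_left₀ hb hba n
    have h2 : a ^ n ≤ 1 := pow_le_one₀ (hb.trans hba) ha
    have h3 : 0 ≤ b ^ n := pow_nonneg hb n
    have h5 : 0 ≤ (1 - a) * (a ^ n - b ^ n) := mul_nonneg (by linarith) (by linarith)
    have h6 : 0 ≤ (a - b) * (1 - b ^ n) := mul_nonneg (by linarith) (by linarith)
    rw [pow_succ, pow_succ]
    push_cast
    linarith [ih, h5, h6]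

private lemma descFact_mul_pow_le (j k n : ℕ) (hk : k ≤ n) :
    k.descFactorial j * n ^ j ≤ k ^ j * n.descFactorial j := by
  have e1 : n ^ j = ∏ _i ∈ Finset.range j, n := by simp
  have e2 : k ^ j = ∏ _i ∈ Finset.range j, k := by simp
  rw [Nat.descFactorial_eq_prod_range, Nat.descFactorial_eq_prod_range, e1, e2,
    ← Finset.prod_mul_distrib, ← Finset.prod_mul_distrib]
  apply Finset.prod_le_prod'
  intro i _
  calc (k - i) * n = k * n - i * n := by rw [Nat.sub_mul]
    _ ≤ k * n - i * k := Nat.sub_le_sub_left (Nat.mul_le_mul_left i hk) _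
    _ = (n - i) * k := by rw [Nat.sub_mul, mul_comm k n]
    _ = k * (n - i) := mul_comm _ _

private lemma pow_mul_descFact_le (j k n : ℕ) :
    (k - j) ^ j * n.descFactorial j ≤ k.descFactorial j * n ^ j := by
  have e1 : n ^ j = ∏ _i ∈ Finset.range j, n := by simp
  have e2 : (k - j) ^ j = ∏ _i ∈ Finset.range j, (k - j) := by simp
  rw [Nat.descFactorial_eq_prod_range, Nat.descFactorial_eq_prod_range, e1, e2,
    ← Finset.prod_mul_distrib, ← Finset.prod_mul_distrib]
  apply Finset.prod_le_prod'
  intro i hi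
  exact Nat.mul_le_mul (Nat.sub_le_sub_left (Finset.mem_range.1 hi).le k) (Nat.sub_le n i)

private lemma ratio_bound {j k n : ℕ} (hj : 1 ≤ j) (hjn : j ≤ n) (hk : k ≤ n) :
    |((k : ℝ) / n) ^ j - (k.choose j : ℝ) / (n.choose j)| ≤ (j : ℝ) ^ 2 / n := by
  have hn : 0 < n := lt_of_lt_of_le hj hjn
  have hn0 : 0 < (n : ℝ) := by exact_mod_cast hn
  have hdF : 0 < n.descFactorial j := Nat.pos_of_ne_zero fun h =>
    absurd (Nat.descFactorial_eq_zero_iff_lt.1 h) (by omega)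
  have hdF0 : 0 < (n.descFactorial j : ℝ) := by exact_mod_cast hdF
  have hcr : (k.choose j : ℝ) / (n.choose j) = (k.descFactorial j : ℝ) / (n.descFactorial j) := by
    rw [Nat.descFactorial_eq_factorial_mul_choose, Nat.descFactorial_eq_factorial_mul_choose]
    push_cast
    rw [mul_div_mul_left _ _ (by exact_mod_cast j.factorial_ne_zero)]
  rw [hcr]
  set r : ℝ := (k.descFactorial j : ℝ) / (n.descFactorial j) with hrdef
  set a : ℝ := (k : ℝ) / n with hadef
  set b : ℝ := ((k - j : ℕ) : ℝ) / n with hbdef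
  have hb0 : 0 ≤ b := by positivity
  have hba : b ≤ a := by
    rw [hadef, hbdef]
    gcongr
    exact_mod_cast Nat.sub_le k j
  have ha1 : a ≤ 1 := by rw [hadef, div_le_one hn0]; exact_mod_cast hk
  have h1 : r ≤ a ^ j := by
    rw [hadef, hrdef, div_pow, div_le_div_iff₀ hdF0 (by positivity)]
    exact_mod_cast descFact_mul_pow_le j k n hk
  have h2 : b ^ j ≤ r := by
    rw [hbdef, hrdef, div_pow, div_le_div_iff₀ (by positivity) hdF0]
    exact_mod_cast pow_mul_descFact_le j k n
  have h3 : a ^ j - b ^ j ≤ j * (a - b) := pow_sub_pow_le_aux hb0 hba ha1 j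
  have h4 : a - b ≤ (j : ℝ) / n := by
    rw [hadef, hbdef, div_sub_div_same]
    gcongr
    have : k ≤ (k - j) + j := le_tsub_add
    have := (Nat.cast_le (α := ℝ)).2 this
    push_cast at this
    linarith
  have habs : |a ^ j - r| = a ^ j - r := abs_of_nonneg (by linarith)
  have hjn0 : (0:ℝ) ≤ j := by positivity
  rw [habs]
  have : (j : ℝ) ^ 2 / n = j * ((j:ℝ)/n) := by ring
  rw [this]
  nlinarith [h3, h4, h2]

private lemma bernstein_elevation (n j : ℕ) (hjn : j ≤ n) :
    ∑ k ∈ Finset.range (n + 1), (k.choose j : Polynomial ℝ) * bernsteinPolynomial ℝ n k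
      = (n.choose j : Polynomial ℝ) * X ^ j := by
  have hsub : Finset.Ico j (n + 1) ⊆ Finset.range (n + 1) := by
    intro k hk; simp only [Finset.mem_Ico, Finset.mem_range] at *; omega
  have h0 : ∀ k ∈ Finset.range (n + 1), k ∉ Finset.Ico j (n + 1) →
      (k.choose j : Polynomial ℝ) * bernsteinPolynomial ℝ n k = 0 := by
    intro k hk hk'
    have hkj : k < j := by
      simp only [Finset.mem_range] at hk
      simp only [Finset.mem_Ico, not_and, not_lt] at hk'
      omega
    simp [Nat.choose_eq_zero_of_lt hkj]
  rw [← Finset.sum_subset hsub h0, Finset.sum_Ico_eq_sum_range]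
  have hn1 : n + 1 - j = (n - j) + 1 := by omega
  rw [hn1]
  have hterm : ∀ m ∈ Finset.range (n - j + 1),
      ((j + m).choose j : Polynomial ℝ) * bernsteinPolynomial ℝ n (j + m)
        = (n.choose j : Polynomial ℝ) * (X ^ j * bernsteinPolynomial ℝ (n - j) m) := by
    intro m hm
    have hm' : m ≤ n - j := Nat.lt_succ_iff.1 (Finset.mem_range.1 hm)
    have hkn : j + m ≤ n := by omega
    have hch : n.choose (j + m) * (j + m).choose j = n.choose j * (n - j).choose m := by
      have h := Nat.choose_mul (n := n) (Nat.le_add_right j m)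
      simpa using h
    have he : n - (j + m) = (n - j) - m := by omega
    rw [bernsteinPolynomial, bernsteinPolynomial, he, pow_add]
    calc (((j + m).choose j : ℕ) : Polynomial ℝ) *
          ((n.choose (j + m) : Polynomial ℝ) * (X ^ j * X ^ m) * (1 - X) ^ (n - j - m))
        = ((n.choose (j + m) * (j + m).choose j : ℕ) : Polynomial ℝ) *
            ((X ^ j * X ^ m) * (1 - X) ^ (n - j - m)) := by push_cast; ring
      _ = ((n.choose j * (n - j).choose m : ℕ) : Polynomial ℝ) *
            ((X ^ j * X ^ m) * (1 - X) ^ (n - j - m)) := by rw [hch]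
      _ = (n.choose j : Polynomial ℝ) *
            (X ^ j * (((n - j).choose m : Polynomial ℝ) * X ^ m * (1 - X) ^ (n - j - m))) := by
          push_cast; ring
  rw [Finset.sum_congr rfl hterm, ← Finset.mul_sum, ← Finset.mul_sum,
    bernsteinPolynomial.sum ℝ (n - j), mul_one]
open MeasureTheory Filter Finset Topology

private lemma intervalIntegrable_ite_pow (i : ℕ) (c b a₁ a₂ : ℝ) :
    IntervalIntegrable (fun x => if c ≤ x then x ^ i * b else 0) volume a₁ a₂ := by
  have hfi : (fun x : ℝ => if c ≤ x then x ^ i * b else 0)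
      = (Set.Ici c).indicator (fun x => x ^ i * b) := by
    funext x; simp [Set.indicator_apply, Set.mem_Ici]
  rw [hfi, intervalIntegrable_iff]
  exact (((continuous_pow i).mul continuous_const).intervalIntegrable a₁ a₂).def'.indicator
    measurableSet_Ici

private lemma integral_ite_pow (i : ℕ) (c b : ℝ) (h0 : 0 ≤ c) (h1 : c ≤ 1) :
    ∫ x in (0:ℝ)..1, (if c ≤ x then x ^ i * b else 0)
      = b * ((1 - c ^ (i + 1)) / (i + 1)) := by
  have hfi : (fun x : ℝ => if c ≤ x then x ^ i * b else 0)
      = (Set.Ici c).indicator (fun x => x ^ i * b) := by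
    funext x; simp [Set.indicator_apply, Set.mem_Ici]
  rw [intervalIntegral.integral_of_le zero_le_one, hfi,
    MeasureTheory.setIntegral_indicator measurableSet_Ici]
  have hseq : (Set.Ioc (0:ℝ) 1 ∩ Set.Ici c : Set ℝ) =ᵐ[volume] (Set.Ioc c 1 : Set ℝ) := by
    apply MeasureTheory.ae_eq_set.2
    refine ⟨measure_mono_null ?_ (measure_singleton c),
      measure_mono_null ?_ (measure_empty (μ := volume))⟩
    · intro x hx
      simp only [Set.mem_diff, Set.mem_inter_iff, Set.mem_Ioc, Set.mem_Ici,
        Set.mem_singleton_iff, not_and, not_le] at hx ⊢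
      rcases hx with ⟨⟨⟨hx1, hx2⟩, hx3⟩, hx4⟩
      by_contra hne
      exact absurd hx2 (not_le.2 (hx4 (lt_of_le_of_ne hx3 (Ne.symm hne))))
    · intro x hx
      simp only [Set.mem_diff, Set.mem_inter_iff, Set.mem_Ioc, Set.mem_Ici] at hx
      rcases hx with ⟨⟨hx1, hx2⟩, hx3⟩
      exact absurd ⟨⟨lt_of_le_of_lt h0 hx1, hx2⟩, hx1.le⟩ hx3
  rw [MeasureTheory.setIntegral_congr_set hseq, ← intervalIntegral.integral_of_le h1,
    intervalIntegral.integral_mul_const, integral_pow]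
  push_cast
  ring

private lemma helly_mono {C : ℝ} {u : ℕ → ℝ → ℝ} (hm : ∀ j, Monotone (u j))
    (h0 : ∀ j x, 0 ≤ u j x) (hC : ∀ j x, u j x ≤ C) :
    Monotone (fun x => Filter.limsup (fun j => u j x) Filter.atTop) := by
  intro x y hxy
  exact Filter.limsup_le_limsup (Filter.Eventually.of_forall fun j => hm j hxy)
    ((Filter.isBoundedUnder_of (r := (· ≥ ·)) ⟨0, fun j => h0 j x⟩).isCoboundedUnder_le)
    (Filter.isBoundedUnder_of (r := (· ≤ ·)) ⟨C, fun j => hC j y⟩)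

private lemma helly_tendsto {C : ℝ} {u : ℕ → ℝ → ℝ} (hm : ∀ j, Monotone (u j))
    (h0 : ∀ j x, 0 ≤ u j x) (hC : ∀ j x, u j x ≤ C)
    (g : ℚ → ℝ) (hg : ∀ q : ℚ, Filter.Tendsto (fun j => u j (q : ℝ)) Filter.atTop (𝓝 (g q)))
    (x : ℝ) (hx : ContinuousAt (fun x => Filter.limsup (fun j => u j x) Filter.atTop) x) :
    Filter.Tendsto (fun j => u j x) Filter.atTop
      (𝓝 (Filter.limsup (fun j => u j x) Filter.atTop)) := by
  set v : ℝ → ℝ := fun x => Filter.limsup (fun j => u j x) Filter.atTop with hv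
  have hBdd : ∀ y, Filter.IsBoundedUnder (· ≤ ·) Filter.atTop (fun j => u j y) :=
    fun y => Filter.isBoundedUnder_of (r := (· ≤ ·)) ⟨C, fun j => hC j y⟩
  have hBdd' : ∀ y, Filter.IsBoundedUnder (· ≥ ·) Filter.atTop (fun j => u j y) :=
    fun y => Filter.isBoundedUnder_of (r := (· ≥ ·)) ⟨0, fun j => h0 j y⟩
  apply tendsto_of_le_liminf_of_limsup_le ?_ le_rfl (hBdd x) (hBdd' x)
  apply le_of_forall_sub_le
  intro ε hε
  obtain ⟨δ, hδ, hδ'⟩ := Metric.continuousAt_iff.1 hx ε hε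
  obtain ⟨q, hq1, hq2⟩ := exists_rat_btwn (show x - δ < x by linarith)
  have hvq : v q = g q := (hg q).limsup_eq
  have hlq : Filter.liminf (fun j => u j (q : ℝ)) Filter.atTop = g q := (hg q).liminf_eq
  have hmono : Filter.liminf (fun j => u j (q : ℝ)) Filter.atTop
      ≤ Filter.liminf (fun j => u j x) Filter.atTop :=
    Filter.liminf_le_liminf (Filter.Eventually.of_forall fun j => hm j hq2.le)
      (hBdd' (q : ℝ)) ((hBdd x).isCoboundedUnder_ge)
  have hdist : dist (q : ℝ) x < δ := by
    rw [Real.dist_eq, abs_of_nonpos (by linarith)]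
    linarith
  have hclose : |v q - v x| < ε := by
    have := hδ' hdist
    rwa [Real.dist_eq] at this
  have : v x - ε ≤ g q := by
    rw [← hvq]
    cases abs_lt.1 hclose with
    | intro h1 h2 => linarith
  linarith [hmono, hlq ▸ this]

private lemma bv_sub_monotone {P N : ℝ → ℝ} (hP : Monotone P) (hN : Monotone N) :
    BoundedVariationOn (fun x => P x - N x) (Set.Icc 0 1) := by
  set f : ℝ → ℝ := fun x => P x - N x with hf
  apply ne_top_of_le_ne_top (b := ENNReal.ofReal ((P 1 - P 0) + (N 1 - N 0)))
    ENNReal.ofReal_ne_top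
  apply iSup_le
  rintro ⟨n, u, hu, us⟩
  calc ∑ i ∈ Finset.range n, edist (f (u (i + 1))) (f (u i))
      ≤ ∑ i ∈ Finset.range n,
          ENNReal.ofReal ((P (u (i + 1)) - P (u i)) + (N (u (i + 1)) - N (u i))) := by
        apply Finset.sum_le_sum
        intro i _
        rw [edist_dist, Real.dist_eq]
        apply ENNReal.ofReal_le_ofReal
        have h1 : P (u i) ≤ P (u (i + 1)) := hP (hu (Nat.le_succ i))
        have h2 : N (u i) ≤ N (u (i + 1)) := hN (hu (Nat.le_succ i))
        rw [abs_le]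
        constructor <;> simp only [hf] <;> linarith
    _ = ENNReal.ofReal (∑ i ∈ Finset.range n,
          ((P (u (i + 1)) - P (u i)) + (N (u (i + 1)) - N (u i)))) := by
        rw [ENNReal.ofReal_sum_of_nonneg]
        intro i _
        have h1 : P (u i) ≤ P (u (i + 1)) := hP (hu (Nat.le_succ i))
        have h2 : N (u i) ≤ N (u (i + 1)) := hN (hu (Nat.le_succ i))
        linarith
    _ = ENNReal.ofReal ((P (u n) - P (u 0)) + (N (u n) - N (u 0))) := by
        rw [Finset.sum_add_distrib, Finset.sum_range_sub (fun i => P (u i)),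
          Finset.sum_range_sub (fun i => N (u i))]
    _ ≤ ENNReal.ofReal ((P 1 - P 0) + (N 1 - N 0)) := by
        apply ENNReal.ofReal_le_ofReal
        have h1 : P (u n) ≤ P 1 := hP (us n).2
        have h2 : P 0 ≤ P (u 0) := hP (us 0).1
        have h3 : N (u n) ≤ N 1 := hN (us n).2
        have h4 : N 0 ≤ N (u 0) := hN (us 0).1
        linarith
open MeasureTheory Polynomial Filter Finset Topology

section helpers
end helpers

/-- If both the Bernstein sums of a sequence `s` and of its derivative sequence `∂s`
(defined via `L_{∂s}(p) = −L_s(p')`) are uniformly bounded, then `s` is represented by a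
density of bounded variation on `[0,1]`. -/
theorem absCont_BV_density (s ds : ℕ → ℝ)
    (L Ld : Polynomial ℝ →ₗ[ℝ] ℝ)
    (hL : ∀ i : ℕ, L (X ^ i) = s i) (hLd : ∀ i : ℕ, Ld (X ^ i) = ds i)
    (hd : ∀ p : Polynomial ℝ, Ld p = -(L (derivative p)))
    (C : ℝ) (hC : 0 < C)
    (h1 : ∀ d : ℕ, ∑ k ∈ Finset.range (d + 1),
      (d.choose k : ℝ) * |L (X ^ k * (1 - X) ^ (d - k))| < C)
    (h2 : ∀ d : ℕ, ∑ k ∈ Finset.range (d + 1),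
      (d.choose k : ℝ) * |Ld (X ^ k * (1 - X) ^ (d - k))| < C) :
    ∃ f : ℝ → ℝ, BoundedVariationOn f (Set.Icc 0 1) ∧
      ∀ i : ℕ, s i = ∫ x in (0:ℝ)..1, x ^ i * f x := by
  set β : ℕ → ℕ → ℝ := fun n k => Ld (bernsteinPolynomial ℝ n k) with hβdef
  have hcastmul : ∀ (c : ℕ) (p : Polynomial ℝ), (c : Polynomial ℝ) * p = (c : ℝ) • p := by
    intro c p
    rw [Polynomial.smul_eq_C_mul, Polynomial.C_eq_natCast]
  have hbern : ∀ n k : ℕ, β n k = (n.choose k : ℝ) * Ld (X ^ k * (1 - X) ^ (n - k)) := by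
    intro n k
    have hb : bernsteinPolynomial ℝ n k = (n.choose k : ℝ) • (X ^ k * (1 - X) ^ (n - k)) := by
      rw [bernsteinPolynomial, mul_assoc, hcastmul]
    rw [hβdef]
    simp only [hb, _root_.map_smul, smul_eq_mul]
  have hbsum : ∀ n : ℕ, ∑ k ∈ Finset.range (n + 1), |β n k| ≤ C := by
    intro n
    calc ∑ k ∈ Finset.range (n + 1), |β n k|
        = ∑ k ∈ Finset.range (n + 1), (n.choose k : ℝ) * |Ld (X ^ k * (1 - X) ^ (n - k))| := by
          refine Finset.sum_congr rfl fun k _ => ?_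
          rw [hbern, abs_mul, abs_of_nonneg (by positivity : (0:ℝ) ≤ (n.choose k : ℝ))]
      _ ≤ C := (h2 n).le
  have hsum0 : ∀ n : ℕ, ∑ k ∈ Finset.range (n + 1), β n k = 0 := by
    intro n
    have h := (map_sum Ld (fun k => bernsteinPolynomial ℝ n k) (Finset.range (n + 1))).symm
    rw [hβdef]
    rw [h, bernsteinPolynomial.sum, hd, Polynomial.derivative_one, map_zero, neg_zero]
  have helev : ∀ n j : ℕ, j ≤ n →
      ∑ k ∈ Finset.range (n + 1), (k.choose j : ℝ) * β n k = (n.choose j : ℝ) * ds j := by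
    intro n j hjn
    have h := congrArg Ld (bernstein_elevation n j hjn)
    rw [map_sum] at h
    simp only [hcastmul, _root_.map_smul, smul_eq_mul, hLd] at h
    exact h
  have happrox : ∀ j n : ℕ, 1 ≤ j → j ≤ n →
      |∑ k ∈ Finset.range (n + 1), ((k : ℝ) / n) ^ j * β n k - ds j| ≤ C * (j:ℝ) ^ 2 / n := by
    intro j n h1j hjn
    have hch0 : (0:ℝ) < (n.choose j : ℝ) := by exact_mod_cast Nat.choose_pos hjn
    have hn0 : (0:ℝ) < (n : ℝ) := by exact_mod_cast lt_of_lt_of_le h1j hjn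
    have hds : ds j = ∑ k ∈ Finset.range (n + 1), (k.choose j : ℝ) / (n.choose j) * β n k := by
      have h := helev n j hjn
      calc ds j = ((n.choose j : ℝ) * ds j) / (n.choose j) := by field_simp
        _ = (∑ k ∈ Finset.range (n + 1), (k.choose j : ℝ) * β n k) / (n.choose j) := by rw [← h]
        _ = ∑ k ∈ Finset.range (n + 1), (k.choose j : ℝ) / (n.choose j) * β n k := by
            rw [Finset.sum_div]
            exact Finset.sum_congr rfl fun k _ => by ring
    rw [hds, ← Finset.sum_sub_distrib]
    calc |∑ k ∈ Finset.range (n + 1),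
          (((k : ℝ) / n) ^ j * β n k - (k.choose j : ℝ) / (n.choose j) * β n k)|
        ≤ ∑ k ∈ Finset.range (n + 1),
          |((k : ℝ) / n) ^ j * β n k - (k.choose j : ℝ) / (n.choose j) * β n k| :=
          Finset.abs_sum_le_sum_abs _ _
      _ ≤ ∑ k ∈ Finset.range (n + 1), (j:ℝ) ^ 2 / n * |β n k| := by
          refine Finset.sum_le_sum fun k hk => ?_
          have hkn : k ≤ n := Nat.lt_succ_iff.1 (Finset.mem_range.1 hk)
          rw [← sub_mul, abs_mul]
          exact mul_le_mul_of_nonneg_right (ratio_bound h1j hjn hkn) (abs_nonneg _)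
      _ = (j:ℝ) ^ 2 / n * ∑ k ∈ Finset.range (n + 1), |β n k| := by rw [← Finset.mul_sum]
      _ ≤ (j:ℝ) ^ 2 / n * C := by
          exact mul_le_mul_of_nonneg_left (hbsum n) (by positivity)
      _ = C * (j:ℝ) ^ 2 / n := by ring
  have htendS : ∀ j : ℕ, 1 ≤ j →
      Tendsto (fun n => ∑ k ∈ Finset.range (n + 1), ((k : ℝ) / n) ^ j * β n k)
        atTop (𝓝 (ds j)) := by
    intro j hj
    rw [← tendsto_sub_nhds_zero_iff]
    apply squeeze_zero_norm' ?_ (tendsto_const_div_atTop_nhds_zero_nat (C * (j:ℝ) ^ 2))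
    filter_upwards [eventually_ge_atTop j] with n hn
    rw [Real.norm_eq_abs]
    exact happrox j n hj hn
  set F : ℕ → ℝ → ℝ :=
    fun n x => ∑ k ∈ Finset.range (n + 1), if (k : ℝ) / n ≤ x then β n k else 0 with hFdef
  have hc01 : ∀ n k : ℕ, k ∈ Finset.range (n + 1) → 0 ≤ (k : ℝ) / n ∧ (k : ℝ) / n ≤ 1 := by
    intro n k hk
    refine ⟨by positivity, ?_⟩
    rcases Nat.eq_zero_or_pos n with h | h
    · subst h
      have : k = 0 := by simpa using Nat.lt_succ_iff.1 (Finset.mem_range.1 hk)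
      simp [this]
    · have hn0 : (0:ℝ) < (n : ℝ) := by exact_mod_cast h
      rw [div_le_one hn0]
      exact_mod_cast Nat.lt_succ_iff.1 (Finset.mem_range.1 hk)
  have hInt : ∀ i n : ℕ, ∫ x in (0:ℝ)..1, x ^ i * F n x
      = ∑ k ∈ Finset.range (n + 1), β n k * ((1 - ((k : ℝ) / n) ^ (i + 1)) / (i + 1)) := by
    intro i n
    have heq : ∀ x ∈ Set.uIcc (0:ℝ) 1, x ^ i * F n x
        = ∑ k ∈ Finset.range (n + 1), (if (k : ℝ) / n ≤ x then x ^ i * β n k else 0) := by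
      intro x _
      rw [hFdef, Finset.mul_sum]
      exact Finset.sum_congr rfl fun k _ => by rw [mul_ite, mul_zero]
    rw [intervalIntegral.integral_congr heq,
      intervalIntegral.integral_finset_sum
        (fun (k : ℕ) _ => intervalIntegrable_ite_pow i ((k : ℝ) / n) (β n k) 0 1)]
    exact Finset.sum_congr rfl fun k hk =>
      integral_ite_pow i ((k : ℝ) / n) (β n k) (hc01 n k hk).1 (hc01 n k hk).2
  have hds1 : ∀ i : ℕ, ds (i + 1) = -(((i : ℝ) + 1) * s i) := by
    intro i
    rw [← hLd, hd, Polynomial.derivative_X_pow]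
    simp only [Nat.add_sub_cancel]
    rw [← Polynomial.smul_eq_C_mul, _root_.map_smul, smul_eq_mul, hL]
    push_cast
    ring
  have hT : ∀ i : ℕ, Tendsto (fun n => ∫ x in (0:ℝ)..1, x ^ i * F n x) atTop (𝓝 (s i)) := by
    intro i
    have hip : (0:ℝ) < (i : ℝ) + 1 := by positivity
    have heq2 : ∀ n : ℕ, ∫ x in (0:ℝ)..1, x ^ i * F n x
        = (0 - ∑ k ∈ Finset.range (n + 1), ((k : ℝ) / n) ^ (i + 1) * β n k) / ((i : ℝ) + 1) := by
      intro n
      rw [hInt i n, ← hsum0 n, ← Finset.sum_sub_distrib, Finset.sum_div]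
      refine Finset.sum_congr rfl fun k _ => ?_
      push_cast
      ring
    have hS := htendS (i + 1) (by omega)
    have hlim : Tendsto
        (fun n => (0 - ∑ k ∈ Finset.range (n + 1), ((k : ℝ) / n) ^ (i + 1) * β n k) / ((i : ℝ) + 1))
        atTop (𝓝 ((0 - ds (i + 1)) / ((i : ℝ) + 1))) :=
      (tendsto_const_nhds.sub hS).div_const _
    have hval : (0 - ds (i + 1)) / ((i : ℝ) + 1) = s i := by
      rw [hds1 i]
      field_simp
      ring
    rw [← hval]
    exact hlim.congr fun n => (heq2 n).symm
  -- Helly selection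
  set pos : ℕ → ℕ → ℝ := fun n k => max (β n k) 0 with hposdef
  set neg : ℕ → ℕ → ℝ := fun n k => max (-β n k) 0 with hnegdef
  set P : ℕ → ℝ → ℝ :=
    fun n x => ∑ k ∈ Finset.range (n + 1), if (k : ℝ) / n ≤ x then pos n k else 0 with hPdef
  set N : ℕ → ℝ → ℝ :=
    fun n x => ∑ k ∈ Finset.range (n + 1), if (k : ℝ) / n ≤ x then neg n k else 0 with hNdef
  have hFPN : ∀ n x, F n x = P n x - N n x := by
    intro n x
    rw [hFdef, hPdef, hNdef, ← Finset.sum_sub_distrib]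
    refine Finset.sum_congr rfl fun k _ => ?_
    split_ifs with h
    · rw [hposdef, hnegdef]
      exact (max_zero_sub_max_neg_zero_eq_self (β n k)).symm
    · rw [sub_zero]
  have hposnn : ∀ n k, 0 ≤ pos n k := fun n k => le_max_right _ _
  have hnegnn : ∀ n k, 0 ≤ neg n k := fun n k => le_max_right _ _
  have hposabs : ∀ n k, pos n k ≤ |β n k| := fun n k => max_le (le_abs_self _) (abs_nonneg _)
  have hnegabs : ∀ n k, neg n k ≤ |β n k| := fun n k =>
    max_le (abs_neg (β n k) ▸ le_abs_self (-β n k)) (abs_nonneg _)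
  have hPmono : ∀ n, Monotone (P n) := by
    intro n x y hxy
    refine Finset.sum_le_sum fun k _ => ?_
    split_ifs with h h'
    · exact le_refl _
    · exact absurd (h.trans hxy) h'
    · exact hposnn n k
    · exact le_refl _
  have hNmono : ∀ n, Monotone (N n) := by
    intro n x y hxy
    refine Finset.sum_le_sum fun k _ => ?_
    split_ifs with h h'
    · exact le_refl _
    · exact absurd (h.trans hxy) h'
    · exact hnegnn n k
    · exact le_refl _
  have hPbound : ∀ n x, 0 ≤ P n x ∧ P n x ≤ C := by
    intro n x
    constructor
    · refine Finset.sum_nonneg fun k _ => ?_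
      split_ifs
      · exact hposnn n k
      · exact le_refl 0
    · refine le_trans ?_ (hbsum n)
      refine Finset.sum_le_sum fun k _ => ?_
      split_ifs
      · exact hposabs n k
      · exact abs_nonneg _
  have hNbound : ∀ n x, 0 ≤ N n x ∧ N n x ≤ C := by
    intro n x
    constructor
    · refine Finset.sum_nonneg fun k _ => ?_
      split_ifs
      · exact hnegnn n k
      · exact le_refl 0
    · refine le_trans ?_ (hbsum n)
      refine Finset.sum_le_sum fun k _ => ?_
      split_ifs
      · exact hnegabs n k
      · exact abs_nonneg _
  -- extract a subsequence converging at all rationals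
  let G : ℕ → (ℚ → (Set.Icc (0:ℝ) C × Set.Icc (0:ℝ) C)) := fun n q =>
    (⟨P n q, (hPbound n q).1, (hPbound n q).2⟩, ⟨N n q, (hNbound n q).1, (hNbound n q).2⟩)
  obtain ⟨a, φ, hφmono, hφtend⟩ := CompactSpace.tendsto_subseq G
  have hGq : ∀ q : ℚ, Tendsto (fun j => G (φ j) q) atTop (𝓝 (a q)) := by
    intro q
    exact ((continuous_apply q).tendsto a).comp hφtend
  have hPq : ∀ q : ℚ, Tendsto (fun j => P (φ j) (q : ℝ)) atTop (𝓝 ((a q).1 : ℝ)) := by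
    intro q
    exact (continuous_subtype_val.tendsto _).comp ((continuous_fst.tendsto _).comp (hGq q))
  have hNq : ∀ q : ℚ, Tendsto (fun j => N (φ j) (q : ℝ)) atTop (𝓝 ((a q).2 : ℝ)) := by
    intro q
    exact (continuous_subtype_val.tendsto _).comp ((continuous_snd.tendsto _).comp (hGq q))
  set Pl : ℝ → ℝ := fun x => Filter.limsup (fun j => P (φ j) x) Filter.atTop with hPldef
  set Nl : ℝ → ℝ := fun x => Filter.limsup (fun j => N (φ j) x) Filter.atTop with hNldef
  have hPlmono : Monotone Pl :=
    helly_mono (fun j => hPmono (φ j)) (fun j x => (hPbound (φ j) x).1)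
      (fun j x => (hPbound (φ j) x).2)
  have hNlmono : Monotone Nl :=
    helly_mono (fun j => hNmono (φ j)) (fun j x => (hNbound (φ j) x).1)
      (fun j x => (hNbound (φ j) x).2)
  have hPltend : ∀ x : ℝ, ContinuousAt Pl x →
      Tendsto (fun j => P (φ j) x) atTop (𝓝 (Pl x)) := fun x hx =>
    helly_tendsto (fun j => hPmono (φ j)) (fun j x => (hPbound (φ j) x).1)
      (fun j x => (hPbound (φ j) x).2) (fun q => ((a q).1 : ℝ)) hPq x hx
  have hNltend : ∀ x : ℝ, ContinuousAt Nl x →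
      Tendsto (fun j => N (φ j) x) atTop (𝓝 (Nl x)) := fun x hx =>
    helly_tendsto (fun j => hNmono (φ j)) (fun j x => (hNbound (φ j) x).1)
      (fun j x => (hNbound (φ j) x).2) (fun q => ((a q).2 : ℝ)) hNq x hx
  have hFmeas : ∀ n, Measurable (F n) := by
    intro n
    rw [hFdef]
    refine Finset.measurable_sum _ fun k _ => ?_
    exact Measurable.ite (measurableSet_le measurable_const measurable_id)
      measurable_const measurable_const
  have hae_contP : ∀ᵐ x : ℝ, ContinuousAt Pl x := by
    rw [MeasureTheory.ae_iff]
    exact Set.Countable.measure_zero hPlmono.countable_not_continuousAt _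
  have hae_contN : ∀ᵐ x : ℝ, ContinuousAt Nl x := by
    rw [MeasureTheory.ae_iff]
    exact Set.Countable.measure_zero hNlmono.countable_not_continuousAt _
  refine ⟨fun x => Pl x - Nl x, bv_sub_monotone hPlmono hNlmono, fun i => ?_⟩
  have hsub : Tendsto (fun j : ℕ => ∫ x in (0:ℝ)..1, x ^ i * F (φ j) x) atTop (𝓝 (s i)) :=
    (hT i).comp hφmono.tendsto_atTop
  have hDCT : Tendsto (fun j => ∫ x in Set.Ioc (0:ℝ) 1, x ^ i * F (φ j) x)
      atTop (𝓝 (∫ x in Set.Ioc (0:ℝ) 1, x ^ i * (Pl x - Nl x))) := by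
    apply MeasureTheory.tendsto_integral_of_dominated_convergence (bound := fun _ => 2 * C)
    · intro j
      exact ((measurable_id.pow_const i).mul (hFmeas (φ j))).aestronglyMeasurable
    · exact MeasureTheory.integrable_const _
    · intro j
      filter_upwards [MeasureTheory.ae_restrict_mem measurableSet_Ioc] with x hx
      have hx1 : |x ^ i| ≤ 1 := by
        rw [abs_pow]
        apply pow_le_one₀ (abs_nonneg x)
        rw [abs_le]
        exact ⟨by linarith [hx.1], hx.2⟩
      have hF2 : |F (φ j) x| ≤ 2 * C := by
        rw [hFPN]
        have hp := hPbound (φ j) x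
        have hn := hNbound (φ j) x
        rw [abs_le]
        constructor <;> linarith
      rw [Real.norm_eq_abs, abs_mul]
      calc |x ^ i| * |F (φ j) x| ≤ 1 * (2 * C) :=
            mul_le_mul hx1 hF2 (abs_nonneg _) zero_le_one
        _ = 2 * C := one_mul _
    · filter_upwards [MeasureTheory.ae_restrict_of_ae hae_contP,
        MeasureTheory.ae_restrict_of_ae hae_contN] with x hxP hxN
      have h1 := hPltend x hxP
      have h2 := hNltend x hxN
      have h3 := ((h1.sub h2).const_mul (x ^ i))
      exact h3.congr fun j => by rw [← hFPN]
  have hconn : ∀ j : ℕ, ∫ x in (0:ℝ)..1, x ^ i * F (φ j) x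
      = ∫ x in Set.Ioc (0:ℝ) 1, x ^ i * F (φ j) x := fun j =>
    intervalIntegral.integral_of_le zero_le_one
  rw [intervalIntegral.integral_of_le zero_le_one]
  exact tendsto_nhds_unique (hsub.congr fun j => hconn j) hDCT
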